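/- arXiv:1112.5709 — 2 statements merged into one kernel-verified Lean document; each statement's English description precedes it below -/
import Mathlib

section
/- Let S be a Stallings section for an m-epi π : Ã* → G. Then the word problem language 1π⁻¹ = {w ∈ Ã* : wπ = 1} is a context-free language. -/
/-!  Common framework: words over an involutive alphabet Ã = A ∪ A⁻¹ (modelled as
`α × Bool`), free reduction, matched epimorphisms, Stallings sections and
Ã-automata, following Silva–Soler-Escrivà–Ventura. -/

/-- A word over the involutive alphabet Ã = A ∪ A⁻¹: the letter `(a, tt)` denotes
`a` and `(a, ff)` denotes `a⁻¹` (the `FreeGroup` convention). -/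
abbrev Word (α : Type) : Type := List (α × Bool)

namespace Stallings

instance {β : Type} : HasSubset (Language β) := ⟨fun L M => ∀ w ∈ L, w ∈ M⟩
instance {β : Type} : Union (Language β) := ⟨fun L M => {w | w ∈ L ∨ w ∈ M}⟩
instance {β : Type} : Inter (Language β) := ⟨fun L M => {w | w ∈ L ∧ w ∈ M}⟩
instance {β : Type} : EmptyCollection (Language β) := ⟨(∅ : Set (List β))⟩

variable {α : Type} {G : Type} [Group G]

/-- The formal inverse of a letter of Ã. -/
def letterInv (x : α × Bool) : α × Bool := (x.1, !x.2)

/-- The formal inverse `w⁻¹` of a word over Ã. -/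
def wordInv (w : Word α) : Word α := (w.map letterInv).reverse

/-- The free reduction `w̄` of a word over Ã (iterated deletion of factors `a a⁻¹`). -/
noncomputable def redW (w : Word α) : Word α :=
  letI := Classical.decEq α
  FreeGroup.reduce w

/-- The reduction `L̄` of a language over Ã. -/
noncomputable def red (L : Language (α × Bool)) : Language (α × Bool) :=
  redW '' L

/-- The set `R_A` of reduced words over Ã. -/
noncomputable def Reduced : Language (α × Bool) := {w | redW w = w}

/-- Evaluation of a monoid homomorphism `π : Ã* → G` at a word. -/
def ev (π : FreeMonoid (α × Bool) →* G) (w : Word α) : G :=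
  π (FreeMonoid.ofList w)

/-- The image of a language under (evaluation of) `π`. -/
def evImg (π : FreeMonoid (α × Bool) →* G) (L : Language (α × Bool)) : Set G :=
  {g | ∃ w ∈ L, ev π w = g}

/-- A matched epimorphism (m-epi) `π : Ã* → G`: a surjective monoid homomorphism
sending formal inverses to inverses. -/
structure IsMEpi (π : FreeMonoid (α × Bool) →* G) : Prop where
  surjective : Function.Surjective π
  matched : ∀ (a : α) (b : Bool),
    π (FreeMonoid.of (a, !b)) = (π (FreeMonoid.of (a, b)))⁻¹

/-- `S_X = Xπ⁻¹ ∩ S`, for `X ⊆ G`. -/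
def sub (S : Language (α × Bool)) (π : FreeMonoid (α × Bool) →* G) (X : Set G) :
    Language (α × Bool) :=
  {w ∈ S | ev π w ∈ X}

/-- A Stallings section for an m-epi `π : Ã* → G`: a regular section `S ⊆ R_A`
such that each `S_g` is regular (S1), and `S_{gh} ⊆ (S_g S_h)‾` (S2). -/
structure IsStallingsSection (π : FreeMonoid (α × Bool) →* G)
    (S : Language (α × Bool)) : Prop where
  regular : S.IsRegular
  reduced : S ⊆ Reduced
  inv_mem : ∀ w ∈ S, wordInv w ∈ S
  exists_rep : ∀ g : G, ∃ w ∈ S, ev π w = g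
  s1 : ∀ g : G, (sub S π {g}).IsRegular
  s2 : ∀ g h : G, sub S π {g * h} ⊆ red (sub S π {g} * sub S π {h})

/-- A group has a Stallings section if some m-epi onto it (from the free monoid on
an involutive finite alphabet) admits a Stallings section. -/
def HasStallingsSection (G : Type) [Group G] : Prop :=
  ∃ (α : Type) (π : FreeMonoid (α × Bool) →* G) (S : Language (α × Bool)),
    Finite α ∧ IsMEpi π ∧ IsStallingsSection π S

/-- `Pref L`: the set of prefixes of words of `L`. -/
def Pref (L : Language (α × Bool)) : Language (α × Bool) :=
  {u | ∃ v, u ++ v ∈ L}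

/-- An extendable Stallings section: every `u ∈ S` admits a reduced word `v` with
`u vⁿ ∈ S` for all `n` and `u ∈ Pref (S_{(u vⁿ u⁻¹)π})` for almost all `n`. -/
def Extendable (π : FreeMonoid (α × Bool) →* G) (S : Language (α × Bool)) : Prop :=
  ∀ u ∈ S, ∃ v : Word α, v ∈ Reduced ∧
    (∀ n : ℕ, u ++ (List.replicate n v).flatten ∈ S) ∧
    ∃ N : ℕ, ∀ n ≥ N, u ∈ Pref (sub S π {ev π u * (ev π v) ^ n * (ev π u)⁻¹})

/-- An Ã-automaton with state type `Q`, initial state `start`, terminal states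
`accept` and edge set `edges`. -/
structure Automaton (β : Type) (Q : Type) where
  start : Q
  accept : Set Q
  edges : Set (Q × β × Q)

namespace Automaton

variable {β Q : Type}

/-- `M.Path p w q`: there is a path from `p` to `q` labelled `w`. -/
inductive Path (M : Automaton β Q) : Q → List β → Q → Prop
  | nil (q : Q) : Path M q [] q
  | cons {p q r : Q} {a : β} {w : List β} :
      (p, a, q) ∈ M.edges → Path M q w r → Path M p (a :: w) r

/-- The language recognized by an automaton. -/
def lang (M : Automaton β Q) : Language β :=
  {w | ∃ t ∈ M.accept, M.Path M.start w t}

/-- A trim automaton: every state lies on some successful path. -/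
def Trim (M : Automaton β Q) : Prop :=
  ∀ q : Q, ∃ (u v : List β) (t : Q), t ∈ M.accept ∧ M.Path M.start u q ∧ M.Path q v t

/-- An involutive Ã-automaton. -/
def Involutive {α : Type} (M : Automaton (α × Bool) Q) : Prop :=
  ∀ p a q, (p, a, q) ∈ M.edges → (q, letterInv a, p) ∈ M.edges

/-- A deterministic automaton. -/
def Deterministic (M : Automaton β Q) : Prop :=
  ∀ p a q q', (p, a, q) ∈ M.edges → (p, a, q') ∈ M.edges → q = q'

/-- An inverse automaton: involutive, deterministic, trim, with a single
terminal state. -/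
def IsInverse {α : Type} (M : Automaton (α × Bool) Q) : Prop :=
  M.Involutive ∧ M.Deterministic ∧ M.Trim ∧ ∃ t : Q, M.accept = {t}

/-- The automaton obtained by identifying the states `p` and `q` (the quotient is
realized on the same state type, redirecting `q` to `p`). -/
def merge [DecidableEq Q] (M : Automaton β Q) (p q : Q) : Automaton β Q :=
  let f : Q → Q := fun x => if x = q then p else x
  { start := f M.start
    accept := f '' M.accept
    edges := {e | ∃ e' ∈ M.edges, e = (f e'.1, e'.2.1, f e'.2.2)} }

end Automaton


namespace WP

variable {α : Type} {G : Type} [Group G]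

/-! ### Basic lemmas about `ev`, `wordInv`, `redW` -/

lemma ev_append (π : FreeMonoid (α × Bool) →* G) (u v : Word α) :
    ev π (u ++ v) = ev π u * ev π v := by
  unfold ev
  rw [FreeMonoid.ofList_append, map_mul]

lemma ev_nil (π : FreeMonoid (α × Bool) →* G) : ev π ([] : Word α) = 1 := by
  unfold ev
  rw [FreeMonoid.ofList_nil, map_one]

lemma ev_singleton (π : FreeMonoid (α × Bool) →* G) (x : α × Bool) :
    ev π [x] = π (FreeMonoid.of x) := by
  unfold ev
  rw [FreeMonoid.ofList_singleton]

lemma ev_letterInv {π : FreeMonoid (α × Bool) →* G} (hπ : IsMEpi π) (x : α × Bool) :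
    ev π [letterInv x] = (ev π [x])⁻¹ := by
  obtain ⟨a, b⟩ := x
  rw [ev_singleton, ev_singleton]
  exact hπ.matched a b

lemma wordInv_nil : wordInv ([] : Word α) = [] := rfl

lemma wordInv_append (u v : Word α) : wordInv (u ++ v) = wordInv v ++ wordInv u := by
  simp [wordInv]

lemma wordInv_cons (x : α × Bool) (u : Word α) :
    wordInv (x :: u) = wordInv u ++ [letterInv x] := by
  simp [wordInv]

lemma wordInv_concat (x : α × Bool) (u : Word α) :
    wordInv (u ++ [x]) = letterInv x :: wordInv u := by
  simp [wordInv]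

lemma letterInv_letterInv (x : α × Bool) : letterInv (letterInv x) = x := by
  simp [letterInv]

lemma wordInv_wordInv (u : Word α) : wordInv (wordInv u) = u := by
  induction u with
  | nil => rfl
  | cons x u ih =>
      rw [wordInv_cons, wordInv_append, ih]
      simp [wordInv, letterInv_letterInv]

lemma wordInv_length (u : Word α) : (wordInv u).length = u.length := by
  simp [wordInv]

lemma ev_wordInv {π : FreeMonoid (α × Bool) →* G} (hπ : IsMEpi π) (u : Word α) :
    ev π (wordInv u) = (ev π u)⁻¹ := by
  induction u with
  | nil => simp [wordInv_nil, ev_nil]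
  | cons x u ih =>
      rw [wordInv_cons, ev_append, ih, ev_letterInv hπ]
      rw [show (x :: u) = [x] ++ u from rfl, ev_append]
      rw [mul_inv_rev]

lemma ev_step {π : FreeMonoid (α × Bool) →* G} (hπ : IsMEpi π) {L₁ L₂ : Word α}
    (h : FreeGroup.Red.Step L₁ L₂) : ev π L₁ = ev π L₂ := by
  induction h with
  | @not L M x b =>
      rw [show L ++ (x, b) :: (x, !b) :: M = L ++ ([(x,b)] ++ ([(x,!b)] ++ M)) by simp,
        ev_append, ev_append, ev_append, ev_append]
      have : ev π [(x, !b)] = (ev π [(x, b)])⁻¹ := by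
        have := ev_letterInv hπ (x, b)
        simpa [letterInv] using this
      rw [this]
      group

lemma ev_red {π : FreeMonoid (α × Bool) →* G} (hπ : IsMEpi π) {L₁ L₂ : Word α}
    (h : FreeGroup.Red L₁ L₂) : ev π L₁ = ev π L₂ := by
  induction h with
  | refl => rfl
  | tail _ hstep ih => exact ih.trans (ev_step hπ hstep)

lemma ev_redW {π : FreeMonoid (α × Bool) →* G} (hπ : IsMEpi π) (w : Word α) :
    ev π (redW w) = ev π w := by
  unfold redW
  exact (ev_red hπ (letI := Classical.decEq α; FreeGroup.reduce.red)).symm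

/-! ### Reduced words: chain characterization and the cancellation lemma -/

/-- Adjacent pair does not cancel. -/
def Ok (a b : α × Bool) : Prop := ¬(a.1 = b.1 ∧ a.2 = !b.2)

lemma redW_def (l : Word α) : redW l = @FreeGroup.reduce α (Classical.decEq α) l := rfl

lemma chain_imp_reduced : ∀ (l : Word α), l.Chain' Ok → redW l = l := by
  letI := Classical.decEq α
  intro l h
  induction l with
  | nil => rfl
  | cons x l ih =>
      have hl : FreeGroup.reduce l = l := ih h.tail
      rw [redW_def, FreeGroup.reduce.cons, hl]
      cases l with
      | nil => rfl
      | cons hd tl =>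
          have hok : ¬(x.1 = hd.1 ∧ x.2 = !hd.2) := (List.isChain_cons_cons.mp h).1
          simp only [if_neg hok]

lemma reduced_imp_chain : ∀ (l : Word α), redW l = l → l.Chain' Ok := by
  letI := Classical.decEq α
  intro l
  induction l with
  | nil => intro _; exact List.isChain_nil
  | cons x l ih =>
      intro h
      rw [redW_def, FreeGroup.reduce.cons] at h
      rcases hr : FreeGroup.reduce l with _ | ⟨hd, tl⟩
      · rw [hr] at h
        injection h.symm with h1 h2
        subst h2
        exact List.isChain_singleton _
      · rw [hr] at h
        by_cases hc : x.1 = hd.1 ∧ x.2 = !hd.2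
        · exfalso
          simp only [if_pos hc] at h
          have h1 : (FreeGroup.reduce l).length ≤ l.length :=
            FreeGroup.Red.length_le FreeGroup.reduce.red
          rw [hr, h] at h1
          simp only [List.length_cons] at h1
          omega
        · simp only [if_neg hc] at h
          have hxl : l = hd :: tl := by
            simpa using congrArg List.tail h.symm
          have hredl : redW l = l := by rw [redW_def, hr, hxl]
          have := ih hredl
          rw [hxl]
          exact List.isChain_cons_cons.mpr ⟨hc, hxl ▸ this⟩

lemma reduced_iff_chain (l : Word α) : redW l = l ↔ l.Chain' Ok :=
  ⟨reduced_imp_chain l, chain_imp_reduced l⟩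

lemma reduced_of_append {u v : Word α} (h : redW (u ++ v) = u ++ v) :
    redW u = u ∧ redW v = v := by
  have := (reduced_iff_chain (u ++ v)).mp h
  simp only [List.Chain'] at this
  rw [List.isChain_append] at this
  exact ⟨(reduced_iff_chain u).mpr this.1, (reduced_iff_chain v).mpr this.2.1⟩

lemma cancel_aux : ∀ (n : ℕ) (u v : Word α), v.length ≤ n → redW u = u → redW v = v →
    ∃ x y t : Word α, u = x ++ y ∧ v = wordInv y ++ t ∧ redW (u ++ v) = x ++ t := by
  letI := Classical.decEq α
  intro n
  induction n with
  | zero =>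
      intro u v hlen hu _
      have : v = [] := List.eq_nil_of_length_eq_zero (Nat.le_zero.mp hlen)
      subst this
      exact ⟨u, [], [], by simp, by simp [wordInv_nil], by simpa using hu⟩
  | succ n ih =>
      intro u v hlen hu hv
      rcases List.eq_nil_or_concat u with rfl | ⟨u', z, rfl⟩
      · exact ⟨[], [], v, rfl, by simp [wordInv_nil], by simpa using hv⟩
      rw [List.concat_eq_append] at hu ⊢
      cases v with
      | nil => exact ⟨u' ++ [z], [], [], by simp, by simp [wordInv_nil], by simpa using hu⟩
      | cons c v' =>
          have hu' : redW u' = u' := (reduced_of_append hu).1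
          have hv' : redW v' = v' := by
            have : redW ([c] ++ v') = [c] ++ v' := hv
            exact (reduced_of_append this).2
          by_cases hc : c = letterInv z
          · have hstep : FreeGroup.Red.Step ((u' ++ [z]) ++ (c :: v')) (u' ++ v') := by
              subst hc
              obtain ⟨a, b⟩ := z
              have := @FreeGroup.Red.Step.not α u' v' a b
              simpa [letterInv] using this
            have hred : redW ((u' ++ [z]) ++ (c :: v')) = redW (u' ++ v') :=
              FreeGroup.reduce.Step.eq hstep
            obtain ⟨x, y, t, hxy, hyt, hrw⟩ := ih u' v' (by
              have := hlen; simp at this ⊢; omega) hu' hv'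
            refine ⟨x, y ++ [z], t, by rw [hxy]; simp, ?_, ?_⟩
            · rw [wordInv_concat, hc, hyt]
              simp
            · rw [hred, hrw]
          · refine ⟨u' ++ [z], [], c :: v', by simp, by simp [wordInv_nil], ?_⟩
            apply chain_imp_reduced
            simp only [List.Chain']
            rw [List.isChain_append]
            refine ⟨(reduced_iff_chain _).mp hu, (reduced_iff_chain _).mp hv, ?_⟩
            intro a ha b hb
            rw [List.getLast?_concat] at ha
            simp only [List.head?_cons, Option.mem_def, Option.some.injEq] at ha hb
            subst ha; subst hb
            intro ⟨h1, h2⟩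
            apply hc
            obtain ⟨c1, c2⟩ := c
            obtain ⟨z1, z2⟩ := z
            simp only [letterInv]
            simp at h1 h2
            exact Prod.ext h1.symm (by rw [h2]; simp)

lemma cancel {u v : Word α} (hu : redW u = u) (hv : redW v = v) :
    ∃ x y t : Word α, u = x ++ y ∧ v = wordInv y ++ t ∧ redW (u ++ v) = x ++ t :=
  cancel_aux v.length u v le_rfl hu hv

/-! ### The pushdown machine -/

/-- Control states of the pushdown machine. -/
inductive St (α : Type) where
  | idle : St α
  | pop (r : Word α) (ℓ : Option (α × Bool)) (q : Word α) : St α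
  | push (q : Word α) : St α

/-- Boundedness of a control state. -/
def StOk (K : ℕ) : St α → Prop
  | .idle => True
  | .pop r _ q => r.length ≤ K ∧ q.length ≤ K
  | .push q => q.length ≤ K

section Machine

variable (π : FreeMonoid (α × Bool) →* G) (K : ℕ)

/-- Control steps (no stack operation). -/
inductive CtrlStep : St α → Option (α × Bool) → St α → Prop where
  | start {s q : Word α} {ℓ : Option (α × Bool)} (hs : s.length ≤ K) (hq : q.length ≤ K)
      (h : ev π q = ev π s * ev π ℓ.toList) : CtrlStep .idle none (.pop s ℓ q)
  | read {q : Word α} {ℓ : Option (α × Bool)} (hq : q.length ≤ K) :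
      CtrlStep (.pop [] ℓ q) ℓ (.push q)
  | done : CtrlStep (.push []) none .idle

/-- Push steps. -/
inductive PushStep : St α → (α × Bool) → St α → Prop where
  | step {x : α × Bool} {q : Word α} (h : q.length + 1 ≤ K) :
      PushStep (.push (x :: q)) x (.push q)

/-- Pop steps. -/
inductive PopStep : St α → (α × Bool) → St α → Prop where
  | step {r : Word α} {x : α × Bool} {ℓ : Option (α × Bool)} {q : Word α}
      (hr : r.length + 1 ≤ K) (hq : q.length ≤ K) :
      PopStep (.pop (r ++ [x]) ℓ q) x (.pop r ℓ q)

/-- The weight of a control state. -/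
def theta : St α → G
  | .idle => 1
  | .pop r ℓ q => (ev π r)⁻¹ * ev π q * (ev π ℓ.toList)⁻¹
  | .push q => ev π q

lemma ctrl_theta {p : St α} {ℓ : Option (α × Bool)} {p' : St α}
    (h : CtrlStep π K p ℓ p') : theta π p' = theta π p * ev π ℓ.toList := by
  cases h with
  | start hs hq hev =>
      simp only [theta, hev, Option.toList_none, ev_nil]
      group
  | read hq =>
      simp only [theta, ev_nil]
      group
  | done =>
      simp only [theta, Option.toList_none, ev_nil]
      group

lemma push_theta {p : St α} {x : α × Bool} {p' : St α}
    (h : PushStep K p x p') : theta π p = ev π [x] * theta π p' := by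
  cases h with
  | step hK =>
      show ev π (_ :: _) = _
      rw [show ∀ (y : α × Bool) (q : Word α), (y :: q) = [y] ++ q from fun _ _ => rfl,
        ev_append]
      rfl

lemma pop_theta {p : St α} {x : α × Bool} {p' : St α}
    (h : PopStep K p x p') : theta π p' = ev π [x] * theta π p := by
  cases h with
  | @step r x ℓ q hr hq =>
      simp only [theta, ev_append]
      group

lemma ctrlStep_ok {p : St α} {ℓ : Option (α × Bool)} {p' : St α}
    (h : CtrlStep π K p ℓ p') : StOk K p ∧ StOk K p' := by
  cases h with
  | start hs hq hev => exact ⟨trivial, hs, hq⟩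
  | read hq => exact ⟨⟨by simp, hq⟩, hq⟩
  | done => exact ⟨by simp [StOk], trivial⟩

lemma pushStep_ok {p : St α} {x : α × Bool} {p' : St α}
    (h : PushStep K p x p') : StOk K p ∧ StOk K p' := by
  cases h with
  | step hK => exact ⟨by simpa [StOk] using hK, by simp [StOk]; omega⟩

lemma popStep_ok {p : St α} {x : α × Bool} {p' : St α}
    (h : PopStep K p x p') : StOk K p ∧ StOk K p' := by
  cases h with
  | step hr hq =>
      refine ⟨⟨by simpa using hr, hq⟩, ⟨by omega, hq⟩⟩

/-- Runs of the machine: `RunSeg p σ w q τ` means the machine goes from control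
state `p` with stack `σ` to control state `q` with stack `τ`, consuming input `w`.
The stack is a list whose head is the top. -/
inductive RunSeg : St α → List (α × Bool) → List (α × Bool) → St α → List (α × Bool) → Prop where
  | nil (p : St α) (σ : List (α × Bool)) : RunSeg p σ [] p σ
  | ctrl {p : St α} {ℓ : Option (α × Bool)} {p' : St α} {σ w q τ}
      (h : CtrlStep π K p ℓ p') (hr : RunSeg p' σ w q τ) : RunSeg p σ (ℓ.toList ++ w) q τ
  | push {p : St α} {x : α × Bool} {p' : St α} {σ w q τ}
      (h : PushStep K p x p') (hr : RunSeg p' (x :: σ) w q τ) : RunSeg p σ w q τ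
  | pop {p : St α} {x : α × Bool} {p' : St α} {σ w q τ}
      (h : PopStep K p x p') (hr : RunSeg p' σ w q τ) : RunSeg p (x :: σ) w q τ

lemma RunSeg.trans {p σ w q τ w' q' τ'} (h1 : RunSeg π K p σ w q τ)
    (h2 : RunSeg π K q τ w' q' τ') : RunSeg π K p σ (w ++ w') q' τ' := by
  induction h1 with
  | nil => simpa using h2
  | ctrl h _ ih => rw [List.append_assoc]; exact .ctrl h (ih h2)
  | push h _ ih => exact .push h (ih h2)
  | pop h _ ih => exact .pop h (ih h2)

lemma popPhase (s : Word α) (ℓ : Option (α × Bool)) (q : Word α) (σ : List (α × Bool))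
    (hs : s.length ≤ K) (hq : q.length ≤ K) :
    RunSeg π K (.pop s ℓ q) (s.reverse ++ σ) [] (.pop [] ℓ q) σ := by
  induction s using List.reverseRecOn with
  | nil => exact .nil _ _
  | append_singleton r x ih =>
      have hstep : PopStep K (.pop (r ++ [x]) ℓ q) x (.pop r ℓ q) :=
        .step (by simpa using hs) hq
      have : (r ++ [x]).reverse ++ σ = x :: (r.reverse ++ σ) := by simp
      rw [this]
      exact .pop hstep (ih (by simp at hs ⊢; omega))

lemma pushPhase (q : Word α) (σ : List (α × Bool)) (hq : q.length ≤ K) :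
    RunSeg π K (.push q) σ [] .idle (q.reverse ++ σ) := by
  induction q generalizing σ with
  | nil =>
      have : RunSeg π K (.push ([] : Word α)) σ ((none : Option (α × Bool)).toList ++ [])
          .idle σ := .ctrl .done (.nil _ _)
      simpa using this
  | cons x q' ih =>
      have hstep : PushStep K (.push (x :: q')) x (.push q') := .step (by simpa using hq)
      have h2 := ih (x :: σ) (by simp at hq ⊢; omega)
      have : q'.reverse ++ (x :: σ) = (x :: q').reverse ++ σ := by simp
      rw [this] at h2
      exact .push hstep h2

lemma moveSeg (s : Word α) (ℓ : Option (α × Bool)) (q : Word α) (σ : List (α × Bool))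
    (hs : s.length ≤ K) (hq : q.length ≤ K) (hev : ev π q = ev π s * ev π ℓ.toList) :
    RunSeg π K .idle (s.reverse ++ σ) ℓ.toList .idle (q.reverse ++ σ) := by
  have h2 : RunSeg π K (.pop [] ℓ q) σ (ℓ.toList ++ []) .idle (q.reverse ++ σ) :=
    .ctrl (.read hq) (pushPhase π K q σ hq)
  have h3 : RunSeg π K (.pop s ℓ q) (s.reverse ++ σ) [] (.pop [] ℓ q) σ :=
    popPhase π K s ℓ q σ hs hq
  have := RunSeg.trans π K (RunSeg.trans π K
    (show RunSeg π K .idle (s.reverse ++ σ) [] (.pop s ℓ q) (s.reverse ++ σ) from by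
      have : RunSeg π K .idle (s.reverse ++ σ) ((none : Option (α × Bool)).toList ++ [])
          (.pop s ℓ q) (s.reverse ++ σ) := .ctrl (.start hs hq hev) (.nil _ _)
      simpa using this) h3) h2
  simpa using this

/-- `Path u w u'` : from stack contents `u` (as a word, read bottom-to-top) the machine can
move to stack contents `u'` consuming input `w`, in idle states, for any deeper stack. -/
def Path (u w u' : Word α) : Prop :=
  ∀ σ, RunSeg π K .idle (u.reverse ++ σ) w .idle (u'.reverse ++ σ)

lemma Path.trans {u w u' w' u''} (h1 : Path π K u w u') (h2 : Path π K u' w' u'') :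
    Path π K u (w ++ w') u'' := fun σ => RunSeg.trans π K (h1 σ) (h2 σ)

lemma path_move (x s q : Word α) (ℓ : Option (α × Bool)) (hs : s.length ≤ K)
    (hq : q.length ≤ K) (hev : ev π q = ev π s * ev π ℓ.toList) :
    Path π K (x ++ s) ℓ.toList (x ++ q) := by
  intro σ
  have := moveSeg π K s ℓ q (x.reverse ++ σ) hs hq hev
  simpa [List.reverse_append, List.append_assoc] using this

end Machine

/-! ### Surgery along a π-constant regular language -/

section Slice

variable {π : FreeMonoid (α × Bool) →* G} {K : ℕ}
variable {σM : Type} [Fintype σM] {M : DFA (α × Bool) σM} {c : G}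

lemma mul_mid_cancel {a x b : G} (h : a * x * b = a * b) : x = 1 := by
  have h1 : a * x = a := mul_right_cancel h
  exact (mul_eq_left).mp h1

lemma contractLeft (hπ : IsMEpi π) (hcard : Fintype.card σM ≤ K)
    (hconst : ∀ v ∈ M.accepts, ev π v = c) :
    ∀ (n : ℕ) (y t : Word α), y.length ≤ n → wordInv y ++ t ∈ M.accepts →
    ∃ ty : Word α, ty.length ≤ Fintype.card σM ∧ ev π ty = ev π y ∧
      wordInv ty ++ t ∈ M.accepts ∧ ∀ x, Path π K (x ++ y) [] (x ++ ty) := by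
  intro n
  induction n with
  | zero =>
      intro y t hlen hacc
      have hy : y = [] := List.eq_nil_of_length_eq_zero (Nat.le_zero.mp hlen)
      subst hy
      exact ⟨[], by simp, rfl, hacc, fun x σ => by simpa using RunSeg.nil _ _⟩
  | succ n ih =>
      intro y t hlen hacc
      by_cases hy : y.length ≤ Fintype.card σM
      · exact ⟨y, hy, rfl, hacc, fun x σ => by simpa using RunSeg.nil _ _⟩
      push_neg at hy
      have hlen2 : Fintype.card σM ≤ (wordInv y).length := by
        rw [wordInv_length]; omega
      obtain ⟨qq, A, B, C, hsplit, hABlen, hBne, hA, hB, hC⟩ :=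
        M.evalFrom_split (s := M.start) (t := M.evalFrom M.start (wordInv y)) hlen2 rfl
      have hyABC : y = wordInv C ++ wordInv B ++ wordInv A := by
        have h0 := congrArg wordInv hsplit
        rw [wordInv_wordInv, wordInv_append, wordInv_append] at h0
        rw [h0, List.append_assoc]
      set y' : Word α := wordInv C ++ wordInv A with hy'
      have hwy' : wordInv y' = A ++ C := by
        rw [hy', wordInv_append, wordInv_wordInv, wordInv_wordInv]
      have hy'acc : wordInv y' ++ t ∈ M.accepts := by
        have hmem := hacc
        rw [DFA.mem_accepts] at hmem ⊢
        have lhs : M.evalFrom M.start (wordInv y' ++ t) = M.evalFrom (M.evalFrom qq C) t := by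
          have e : wordInv y' ++ t = (A ++ C) ++ t := by rw [hwy']
          rw [e, M.evalFrom_of_append, M.evalFrom_of_append, hA]
        have rhs : M.evalFrom M.start (wordInv y ++ t) = M.evalFrom (M.evalFrom qq C) t := by
          have e : wordInv y ++ t = ((A ++ B) ++ C) ++ t := by rw [hsplit]
          rw [e, M.evalFrom_of_append, M.evalFrom_of_append, M.evalFrom_of_append, hA, hB]
        show M.evalFrom M.start _ ∈ M.accept
        rw [lhs, ← rhs]
        exact hmem
      have hBev : ev π B = 1 := by
        have e1 : ev π A * ev π B * ev π (C ++ t) = c := by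
          calc ev π A * ev π B * ev π (C ++ t)
              = ev π (A ++ B ++ (C ++ t)) := by simp only [ev_append, mul_assoc]
            _ = ev π (wordInv y ++ t) := by
                congr 1
                rw [hsplit]
                simp [List.append_assoc]
            _ = c := hconst _ hacc
        have e2 : ev π A * ev π (C ++ t) = c := by
          calc ev π A * ev π (C ++ t)
              = ev π (A ++ (C ++ t)) := by simp only [ev_append, mul_assoc]
            _ = ev π (wordInv y' ++ t) := by
                congr 1
                rw [hwy']
                simp [List.append_assoc]
            _ = c := hconst _ hy'acc
        exact mul_mid_cancel (e1.trans e2.symm)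
      have hyev : ev π y' = ev π y := by
        rw [hy', hyABC]
        simp only [ev_append, ev_wordInv hπ, hBev, inv_one, one_mul, mul_one, mul_assoc]
      have hmove : ∀ x, Path π K (x ++ y) [] (x ++ y') := by
        intro x
        have hp := path_move π K (x ++ wordInv C) (wordInv B ++ wordInv A) (wordInv A)
          none ?_ ?_ ?_
        · have e1 : (x ++ wordInv C) ++ (wordInv B ++ wordInv A) = x ++ y := by
            rw [hyABC]; simp [List.append_assoc]
          have e2 : (x ++ wordInv C) ++ wordInv A = x ++ y' := by
            rw [hy']; simp [List.append_assoc]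
          rw [e1, e2] at hp
          simpa using hp
        · simp only [List.length_append, wordInv_length]
          omega
        · simp only [wordInv_length]
          omega
        · simp only [Option.toList_none, ev_nil, mul_one, ev_append, ev_wordInv hπ, hBev]
          simp
      have hlt : y'.length ≤ n := by
        have hbne : 1 ≤ B.length := by
          cases B with
          | nil => exact absurd rfl hBne
          | cons _ _ => simp
        have : (wordInv y).length = A.length + B.length + C.length := by
          rw [hsplit]; simp; try omega
        rw [wordInv_length] at this
        have : y'.length = C.length + A.length := by
          rw [hy']; simp [wordInv_length]
        omega
      obtain ⟨ty, h1, h2, h3, h4⟩ := ih y' t hlt hy'acc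
      refine ⟨ty, h1, h2.trans hyev, h3, fun x => ?_⟩
      have := Path.trans π K (hmove x) (h4 x)
      simpa using this

lemma growRight (hπ : IsMEpi π) (hcard : Fintype.card σM ≤ K)
    (hconst : ∀ v ∈ M.accepts, ev π v = c) :
    ∀ (n : ℕ) (y t : Word α), t.length ≤ n → wordInv y ++ t ∈ M.accepts →
    ∃ t' : Word α, t'.length ≤ Fintype.card σM ∧ ev π t' = ev π t ∧
      wordInv y ++ t' ∈ M.accepts ∧ ∀ x, Path π K (x ++ t') [] (x ++ t) := by
  intro n
  induction n with
  | zero =>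
      intro y t hlen hacc
      have ht : t = [] := List.eq_nil_of_length_eq_zero (Nat.le_zero.mp hlen)
      subst ht
      exact ⟨[], by simp, rfl, hacc, fun x σ => by simpa using RunSeg.nil _ _⟩
  | succ n ih =>
      intro y t hlen hacc
      by_cases ht : t.length ≤ Fintype.card σM
      · exact ⟨t, ht, rfl, hacc, fun x σ => by simpa using RunSeg.nil _ _⟩
      push_neg at ht
      set nc := Fintype.card σM with hnc
      set t₁ : Word α := t.take (t.length - nc) with ht₁
      set t₂ : Word α := t.drop (t.length - nc) with ht₂
      have htsplit : t = t₁ ++ t₂ := (List.take_append_drop _ t).symm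
      have ht₂len : t₂.length = nc := by
        rw [ht₂, List.length_drop]; omega
      obtain ⟨qq, A, B, C, hsplit, hABlen, hBne, hA, hB, hC⟩ :=
        M.evalFrom_split (s := M.evalFrom M.start (wordInv y ++ t₁))
          (t := M.evalFrom (M.evalFrom M.start (wordInv y ++ t₁)) t₂)
          (by rw [ht₂len]) rfl
      set t' : Word α := t₁ ++ A ++ C with ht'
      have ht'acc : wordInv y ++ t' ∈ M.accepts := by
        have hmem := hacc
        rw [DFA.mem_accepts] at hmem ⊢
        have lhs : M.evalFrom M.start (wordInv y ++ t') = M.evalFrom qq C := by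
          have e : wordInv y ++ t' = (((wordInv y ++ t₁) ++ A) ++ C) := by
            rw [ht']; simp [List.append_assoc]
          rw [e, M.evalFrom_of_append, M.evalFrom_of_append, hA]
        have rhs : M.evalFrom M.start (wordInv y ++ t) = M.evalFrom qq C := by
          have e : wordInv y ++ t = ((((wordInv y ++ t₁) ++ A) ++ B) ++ C) := by
            rw [htsplit, hsplit]; simp [List.append_assoc]
          rw [e, M.evalFrom_of_append, M.evalFrom_of_append, M.evalFrom_of_append, hA, hB]
        show M.evalFrom M.start _ ∈ M.accept
        rw [lhs, ← rhs]
        exact hmem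
      have hBev : ev π B = 1 := by
        have e1 : ev π (wordInv y ++ t₁ ++ A) * ev π B * ev π C = c := by
          calc ev π (wordInv y ++ t₁ ++ A) * ev π B * ev π C
              = ev π ((wordInv y ++ t₁ ++ A) ++ B ++ C) := by simp only [ev_append, mul_assoc]
            _ = ev π (wordInv y ++ t) := by
                congr 1
                rw [htsplit, hsplit]
                simp [List.append_assoc]
            _ = c := hconst _ hacc
        have e2 : ev π (wordInv y ++ t₁ ++ A) * ev π C = c := by
          calc ev π (wordInv y ++ t₁ ++ A) * ev π C
              = ev π ((wordInv y ++ t₁ ++ A) ++ C) := by simp only [ev_append, mul_assoc]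
            _ = ev π (wordInv y ++ t') := by
                congr 1
                rw [ht']
                simp [List.append_assoc]
            _ = c := hconst _ ht'acc
        exact mul_mid_cancel (e1.trans e2.symm)
      have htev : ev π t' = ev π t := by
        rw [ht', htsplit, hsplit, ev_append, ev_append, ev_append, ev_append,
          ev_append, hBev]
        group
      have hmove : ∀ x, Path π K (x ++ t') [] (x ++ t) := by
        intro x
        have hp := path_move π K (x ++ t₁ ++ A) C (B ++ C) none ?_ ?_ ?_
        · have e1 : (x ++ t₁ ++ A) ++ C = x ++ t' := by rw [ht']; simp [List.append_assoc]
          have e2 : (x ++ t₁ ++ A) ++ (B ++ C) = x ++ t := by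
            rw [htsplit, hsplit]; simp [List.append_assoc]
          rw [e1, e2] at hp
          simpa using hp
        · have : A.length + B.length + C.length = nc := by
            rw [← ht₂len, hsplit]; simp [List.length_append]; try omega
          omega
        · have : A.length + B.length + C.length = nc := by
            rw [← ht₂len, hsplit]; simp [List.length_append]; try omega
          simp only [List.length_append]
          omega
        · rw [ev_append, hBev, one_mul]
          simp [ev_nil]
      have hlt : t'.length ≤ n := by
        have hbne : 1 ≤ B.length := by
          cases B with
          | nil => exact absurd rfl hBne
          | cons _ _ => simp
        have h5 : A.length + B.length + C.length = nc := by
          rw [← ht₂len, hsplit]; simp [List.length_append]; try omega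
        have h6 : t.length = t₁.length + nc := by
          conv_lhs => rw [htsplit]
          simp [ht₂len]
        have h7 : t'.length = t₁.length + A.length + C.length := by
          rw [ht']; simp; try omega
        omega
      obtain ⟨t'', h1, h2, h3, h4⟩ := ih y t' hlt ht'acc
      refine ⟨t'', h1, h2.trans htev, h3, fun x => ?_⟩
      have := Path.trans π K (h4 x) (hmove x)
      simpa using this

lemma slice (hπ : IsMEpi π) (hcard : Fintype.card σM ≤ K)
    (ℓ : Option (α × Bool)) (hconst : ∀ v ∈ M.accepts, ev π v = ev π ℓ.toList)
    (y t : Word α) (hacc : wordInv y ++ t ∈ M.accepts) (x : Word α) :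
    Path π K (x ++ y) ℓ.toList (x ++ t) := by
  obtain ⟨ty, hy1, hy2, hy3, hy4⟩ :=
    contractLeft hπ hcard hconst y.length y t le_rfl hacc
  obtain ⟨tt0, ht1, ht2, ht3, ht4⟩ :=
    growRight hπ hcard hconst t.length ty t le_rfl hy3
  have hmid : Path π K (x ++ ty) ℓ.toList (x ++ tt0) := by
    apply path_move π K x ty tt0 ℓ (le_trans hy1 hcard) (le_trans ht1 hcard)
    have h0 := hconst _ hacc
    rw [ev_append, ev_wordInv hπ] at h0
    rw [ht2, hy2]
    rw [← h0]
    group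
  have := Path.trans π K (Path.trans π K (hy4 x) hmid) (ht4 x)
  simpa using this

end Slice

/-! ### The grammar -/

section Grammar

variable (π : FreeMonoid (α × Bool) →* G) (K : ℕ)

/-- The rules of the grammar. -/
def RuleSet : Set (ContextFreeRule (α × Bool) (St α × St α)) :=
  {r | (∃ p : St α, StOk K p ∧ r = ⟨(p, p), []⟩)
    ∨ (∃ (p : St α) (ℓ : Option (α × Bool)) (p' q0 : St α), CtrlStep π K p ℓ p' ∧ StOk K q0 ∧
        r = ⟨(p, q0), ℓ.toList.map Symbol.terminal ++ [Symbol.nonterminal (p', q0)]⟩)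
    ∨ (∃ (p : St α) (x : α × Bool) (p' u u' q0 : St α), PushStep K p x p' ∧ PopStep K u x u' ∧
        StOk K q0 ∧ r = ⟨(p, q0), [Symbol.nonterminal (p', u), Symbol.nonterminal (u', q0)]⟩)}

lemma stOk_finite [Finite α] : {p : St α | StOk K p}.Finite := by
  haveI : Finite (Option (α × Bool)) := @Finite.of_fintype _ (@instFintypeOption _ (Fintype.ofFinite _))
  have hW : {w : Word α | w.length ≤ K}.Finite := List.finite_length_le _ K
  have h1 : ({St.idle} : Set (St α)).Finite := Set.finite_singleton _
  have h2 : ((fun w => St.push w) '' {w : Word α | w.length ≤ K}).Finite := hW.image _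
  have h3 : ((fun z : Word α × Option (α × Bool) × Word α => St.pop z.1 z.2.1 z.2.2) ''
      ({w : Word α | w.length ≤ K} ×ˢ (Set.univ : Set (Option (α × Bool))) ×ˢ
        {w : Word α | w.length ≤ K})).Finite :=
    ((hW.prod (Set.finite_univ.prod hW)).image _)
  apply Set.Finite.subset ((h1.union h2).union h3)
  intro p hp
  cases p with
  | idle => exact Or.inl (Or.inl rfl)
  | pop r ℓ q =>
      refine Or.inr ⟨(r, ℓ, q), ⟨hp.1, trivial, hp.2⟩, rfl⟩
  | push q => exact Or.inl (Or.inr ⟨q, hp, rfl⟩)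

lemma ruleSet_finite [Finite α] : (RuleSet π K).Finite := by
  haveI : Finite (Option (α × Bool)) := @Finite.of_fintype _ (@instFintypeOption _ (Fintype.ofFinite _))
  have hB := stOk_finite (α := α) K
  have h1 : ((fun p : St α => (⟨(p, p), []⟩ : ContextFreeRule (α × Bool) (St α × St α))) ''
      {p : St α | StOk K p}).Finite := hB.image _
  have h2 : ((fun z : St α × Option (α × Bool) × St α × St α =>
      (⟨(z.1, z.2.2.2), z.2.1.toList.map Symbol.terminal ++
        [Symbol.nonterminal (z.2.2.1, z.2.2.2)]⟩ : ContextFreeRule (α × Bool) (St α × St α))) ''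
      ({p : St α | StOk K p} ×ˢ (Set.univ : Set (Option (α × Bool))) ×ˢ
        {p : St α | StOk K p} ×ˢ {p : St α | StOk K p})).Finite :=
    (hB.prod (Set.finite_univ.prod (hB.prod hB))).image _
  have h3 : ((fun z : St α × (α × Bool) × St α × St α × St α × St α =>
      (⟨(z.1, z.2.2.2.2.2), [Symbol.nonterminal (z.2.2.1, z.2.2.2.1),
        Symbol.nonterminal (z.2.2.2.2.1, z.2.2.2.2.2)]⟩ :
          ContextFreeRule (α × Bool) (St α × St α))) ''
      ({p : St α | StOk K p} ×ˢ (Set.univ : Set (α × Bool)) ×ˢ {p : St α | StOk K p} ×ˢ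
        {p : St α | StOk K p} ×ˢ {p : St α | StOk K p} ×ˢ {p : St α | StOk K p})).Finite :=
    (hB.prod (Set.finite_univ.prod (hB.prod (hB.prod (hB.prod hB))))).image _
  apply Set.Finite.subset ((h1.union h2).union h3)
  intro r hr
  rcases hr with ⟨p, hp, rfl⟩ | ⟨p, ℓ, p', q0, hstep, hq0, rfl⟩ |
    ⟨p, x, p', u, u', q0, hpush, hpop, hq0, rfl⟩
  · exact Or.inl (Or.inl ⟨p, hp, rfl⟩)
  · have hok := ctrlStep_ok π K hstep
    exact Or.inl (Or.inr ⟨(p, ℓ, p', q0), ⟨hok.1, trivial, hok.2, hq0⟩, rfl⟩)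
  · have hok1 := pushStep_ok K hpush
    have hok2 := popStep_ok K hpop
    exact Or.inr ⟨(p, x, p', u, u', q0), ⟨hok1.1, trivial, hok1.2, hok2.1, hok2.2, hq0⟩, rfl⟩

/-- The grammar. -/
@[reducible] noncomputable def gram [Finite α] : ContextFreeGrammar (α × Bool) :=
  ⟨St α × St α, (St.idle, St.idle), (ruleSet_finite π K).toFinset⟩

/-- Weight of a symbol. -/
def wt : Symbol (α × Bool) (St α × St α) → G
  | .terminal a => ev π [a]
  | .nonterminal pq => (theta π pq.1)⁻¹ * theta π pq.2

/-- Weight of a sentential form. -/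
def phiW (l : List (Symbol (α × Bool) (St α × St α))) : G := (l.map (wt π)).prod

lemma phiW_append (l1 l2 : List (Symbol (α × Bool) (St α × St α))) :
    phiW π (l1 ++ l2) = phiW π l1 * phiW π l2 := by
  simp [phiW]

lemma phiW_terminal (w : Word α) : phiW π (w.map Symbol.terminal) = ev π w := by
  induction w with
  | nil => simp [phiW, ev_nil]
  | cons a w ih =>
      have : (a :: w) = [a] ++ w := rfl
      rw [this, ev_append, ← ih]
      simp [phiW, wt]

lemma rule_balanced {r : ContextFreeRule (α × Bool) (St α × St α)} (hr : r ∈ RuleSet π K) :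
    phiW π r.output = wt π (Symbol.nonterminal r.input) := by
  rcases hr with ⟨p, hp, rfl⟩ | ⟨p, ℓ, p', q0, hstep, hq0, rfl⟩ |
    ⟨p, x, p', u, u', q0, hpush, hpop, hq0, rfl⟩
  · simp [phiW, wt]
  · rw [phiW_append, phiW_terminal]
    have hθ := ctrl_theta π K hstep
    simp only [phiW, wt, List.map_cons, List.map_nil, List.prod_cons, List.prod_nil, mul_one, hθ]
    group
  · have hθ1 := push_theta π K hpush
    have hθ2 := pop_theta π K hpop
    simp only [phiW, wt, List.map_cons, List.map_nil, List.prod_cons, List.prod_nil, mul_one,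
      hθ2]
    rw [show theta π p' = (ev π [x])⁻¹ * theta π p by rw [hθ1]; group]
    group

lemma derives_phi [Finite α] {u v : List (Symbol (α × Bool) (St α × St α))}
    (h : (gram π K).Derives u v) : phiW π u = phiW π v := by
  induction h with
  | refl => rfl
  | tail _ hstep ih =>
      obtain ⟨r, hrmem, hrw⟩ := hstep
      obtain ⟨pfx, sfx, h1, h2⟩ := hrw.exists_parts
      have hbal : phiW π r.output = wt π (Symbol.nonterminal r.input) :=
        rule_balanced π K ((Set.Finite.mem_toFinset _).mp hrmem)
      rw [ih, h1, h2, phiW_append, phiW_append, phiW_append, phiW_append, hbal]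
      simp [phiW]

lemma gram_sound [Finite α] {w : Word α} (hw : w ∈ (gram π K).language) : ev π w = 1 := by
  have h := derives_phi π K hw
  rw [phiW_terminal] at h
  rw [← h]
  simp [phiW, wt, gram, theta]

end Grammar

/-! ### From runs to derivations -/

section Sim

variable (π : FreeMonoid (α × Bool) →* G) (K : ℕ) [Finite α]

/-- Words derivable from the nonterminal `(p, q)`. -/
def DerL (p q : St α) : Language (α × Bool) :=
  {w | (gram π K).Derives [Symbol.nonterminal (p, q)] (w.map Symbol.terminal)}

lemma mem_rules {r : ContextFreeRule (α × Bool) (St α × St α)} (hr : r ∈ RuleSet π K) :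
    r ∈ (gram π K).rules :=
  (Set.Finite.mem_toFinset _).mpr hr

lemma derL_nil {p : St α} (hp : StOk K p) : [] ∈ DerL π K p p := by
  have hrule : (⟨(p, p), []⟩ : ContextFreeRule (α × Bool) (St α × St α)) ∈ RuleSet π K :=
    Or.inl ⟨p, hp, rfl⟩
  have : (gram π K).Produces [Symbol.nonterminal (p, p)] [] :=
    ⟨_, mem_rules π K hrule, ContextFreeRule.Rewrites.input_output⟩
  exact this.single

lemma derL_ctrl {p : St α} {ℓ : Option (α × Bool)} {p' q0 : St α}
    (hstep : CtrlStep π K p ℓ p') (hq0 : StOk K q0) {w : Word α} (hw : w ∈ DerL π K p' q0) :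
    ℓ.toList ++ w ∈ DerL π K p q0 := by
  have hrule : (⟨(p, q0), ℓ.toList.map Symbol.terminal ++ [Symbol.nonterminal (p', q0)]⟩ :
      ContextFreeRule (α × Bool) (St α × St α)) ∈ RuleSet π K :=
    Or.inr (Or.inl ⟨p, ℓ, p', q0, hstep, hq0, rfl⟩)
  have h1 : (gram π K).Produces [Symbol.nonterminal (p, q0)]
      (ℓ.toList.map Symbol.terminal ++ [Symbol.nonterminal (p', q0)]) :=
    ⟨_, mem_rules π K hrule, ContextFreeRule.Rewrites.input_output⟩
  have h2 : (gram π K).Derives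
      (ℓ.toList.map Symbol.terminal ++ [Symbol.nonterminal (p', q0)])
      (ℓ.toList.map Symbol.terminal ++ w.map Symbol.terminal) :=
    ContextFreeGrammar.Derives.append_left hw _
  have := h1.trans_derives h2
  show (gram π K).Derives _ _
  rw [List.map_append]
  exact this

lemma derL_pair {p : St α} {x : α × Bool} {p' u u' q0 : St α}
    (hpush : PushStep K p x p') (hpop : PopStep K u x u') (hq0 : StOk K q0)
    {w₁ w₂ : Word α} (h1 : w₁ ∈ DerL π K p' u) (h2 : w₂ ∈ DerL π K u' q0) :
    w₁ ++ w₂ ∈ DerL π K p q0 := by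
  have hrule : (⟨(p, q0), [Symbol.nonterminal (p', u), Symbol.nonterminal (u', q0)]⟩ :
      ContextFreeRule (α × Bool) (St α × St α)) ∈ RuleSet π K :=
    Or.inr (Or.inr ⟨p, x, p', u, u', q0, hpush, hpop, hq0, rfl⟩)
  have hstep : (gram π K).Produces [Symbol.nonterminal (p, q0)]
      [Symbol.nonterminal (p', u), Symbol.nonterminal (u', q0)] :=
    ⟨_, mem_rules π K hrule, ContextFreeRule.Rewrites.input_output⟩
  have hd1 : (gram π K).Derives
      [Symbol.nonterminal (p', u), Symbol.nonterminal (u', q0)]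
      (w₁.map Symbol.terminal ++ [Symbol.nonterminal (u', q0)]) := by
    have := ContextFreeGrammar.Derives.append_right h1 [Symbol.nonterminal (u', q0)]
    simpa using this
  have hd2 : (gram π K).Derives
      (w₁.map Symbol.terminal ++ [Symbol.nonterminal (u', q0)])
      (w₁.map Symbol.terminal ++ w₂.map Symbol.terminal) :=
    ContextFreeGrammar.Derives.append_left h2 _
  have := (hstep.trans_derives hd1).trans hd2
  show (gram π K).Derives _ _
  rw [List.map_append]
  exact this

/-- The language of runs from `(p, σ)` to `(q, [])`, decomposed along the stack. -/
def Fst : St α → List (α × Bool) → St α → Language (α × Bool)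
  | p, [], q => DerL π K p q
  | p, x :: σ, q => {w | ∃ u u' w₁ w₂, PopStep K u x u' ∧ w = w₁ ++ w₂ ∧
      w₁ ∈ DerL π K p u ∧ w₂ ∈ Fst u' σ q}

lemma sim : ∀ {p σ w q τ}, RunSeg π K p σ w q τ → τ = [] → StOk K p → StOk K q →
    w ∈ Fst π K p σ q := by
  intro p σ w q τ h
  induction h with
  | nil p σ =>
      intro hτ hp _
      subst hτ
      exact derL_nil π K hp
  | @ctrl p ℓ p' σ w q τ hstep hrun ih =>
      intro hτ hp hq
      have hp' := (ctrlStep_ok π K hstep).2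
      have hw := ih hτ hp' hq
      cases σ with
      | nil => exact derL_ctrl π K hstep hq hw
      | cons z σ' =>
          obtain ⟨u, u', w₁, w₂, hpop, rfl, h1, h2⟩ := hw
          exact ⟨u, u', ℓ.toList ++ w₁, w₂, hpop, by rw [List.append_assoc],
            derL_ctrl π K hstep (popStep_ok K hpop).1 h1, h2⟩
  | @push p x p' σ w q τ hstep hrun ih =>
      intro hτ hp hq
      have hp' := (pushStep_ok K hstep).2
      have hw := ih hτ hp' hq
      obtain ⟨u, u', w₁, w₂, hpop, rfl, h1, h2⟩ := hw
      cases σ with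
      | nil => exact derL_pair π K hstep hpop hq h1 h2
      | cons z σ' =>
          obtain ⟨ρ, ρ', w₃, w₄, hpop2, rfl, h3, h4⟩ := h2
          exact ⟨ρ, ρ', w₁ ++ w₃, w₄, hpop2, by rw [List.append_assoc],
            derL_pair π K hstep hpop (popStep_ok K hpop2).1 h1 h3, h4⟩
  | @pop p x p' σ w q τ hstep hrun ih =>
      intro hτ hp hq
      have hp' := (popStep_ok K hstep).2
      have hw := ih hτ hp' hq
      exact ⟨p, p', [], w, hstep, rfl, derL_nil π K hp, hw⟩

end Sim

end WP

end Stallings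
open Stallings in
/-- If an m-epi `π : Ã* → G` admits a Stallings section, then the
word problem language `1π⁻¹ = {w ∈ Ã* : wπ = 1}` is context-free. -/
theorem wordProblem_isContextFree {α G : Type} [Finite α] [Group G]
    (π : FreeMonoid (α × Bool) →* G) (hπ : IsMEpi π)
    (S : Language (α × Bool)) (hS : IsStallingsSection π S) :
    Language.IsContextFree (setOf (fun w : Word α => ev π w = 1)
      : Language (α × Bool)) := by
  classical
  have hreg : ∀ a : α × Bool, (sub S π {ev π [a]}).IsRegular := fun a => hS.s1 _
  choose σf insf Mf hMf using hreg
  obtain ⟨σ1, ins1, M1, hM1⟩ := hS.s1 1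
  letI : Fintype (α × Bool) := Fintype.ofFinite _
  set K : ℕ := max (Fintype.card σ1)
    (Finset.univ.sup fun a : α × Bool => @Fintype.card (σf a) (insf a)) with hKdef
  have hK1 : Fintype.card σ1 ≤ K := le_max_left _ _
  have hKa : ∀ a : α × Bool, @Fintype.card (σf a) (insf a) ≤ K := by
    intro a
    rw [hKdef]
    exact le_trans
      (Finset.le_sup (f := fun a : α × Bool => @Fintype.card (σf a) (insf a))
        (Finset.mem_univ a)) (le_max_right _ _)
  have hconst1 : ∀ v ∈ M1.accepts, ev π v = ev π ((none : Option (α × Bool)).toList) := by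
    intro v hv
    rw [hM1] at hv
    have := hv.2
    simpa [WP.ev_nil] using this
  refine ⟨WP.gram π K, ?_⟩
  ext w
  constructor
  · intro hw
    exact WP.gram_sound π K hw
  · intro hw
    have hw1 : ev π w = 1 := hw
    have hmain : ∀ (w' : Word α) (u : Word α), u ∈ S → ev π u = ev π w' →
        WP.Path π K [] w' u := by
      intro w'
      induction w' using List.reverseRecOn with
      | nil =>
          intro u huS hev
          have hacc : wordInv [] ++ u ∈ M1.accepts := by
            rw [hM1]
            show u ∈ sub S π {1}
            exact ⟨huS, by rw [Set.mem_singleton_iff, hev, WP.ev_nil]⟩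
          have := WP.slice hπ hK1 none hconst1 [] u hacc []
          simpa using this
      | append_singleton w' a ih =>
          intro u huS hev
          have hu_sub : u ∈ sub S π {ev π w' * ev π [a]} :=
            ⟨huS, by rw [Set.mem_singleton_iff, hev, WP.ev_append]⟩
          have hred := hS.s2 (ev π w') (ev π [a]) u hu_sub
          obtain ⟨z, hz, hzred⟩ := hred
          replace hz := Language.mem_mul.mp hz
          obtain ⟨u₁, h₁, v, h₂, rfl⟩ := hz
          have hu₁red : redW u₁ = u₁ := hS.reduced u₁ h₁.1
          have hvred : redW v = v := hS.reduced v h₂.1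
          obtain ⟨x, y, t, hxy, hyt, hredeq⟩ := WP.cancel hu₁red hvred
          have hu_eq : u = x ++ t := by rw [← hzred, hredeq]
          have ih1 : WP.Path π K [] w' u₁ := ih u₁ h₁.1 (by simpa using h₁.2)
          letI := insf a
          have hconsta : ∀ v' ∈ (Mf a).accepts,
              ev π v' = ev π ((some a : Option (α × Bool)).toList) := by
            intro v' hv'
            rw [hMf a] at hv'
            simpa using hv'.2
          have hacc : wordInv y ++ t ∈ (Mf a).accepts := by
            rw [hMf a, ← hyt]
            exact h₂
          have hsl := WP.slice hπ (hKa a) (some a) hconsta y t hacc x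
          rw [← hxy, ← hu_eq] at hsl
          have := WP.Path.trans π K ih1 hsl
          exact this
    obtain ⟨u₀, hu₀S, hu₀⟩ := hS.exists_rep 1
    have h1 : WP.Path π K [] w u₀ := hmain w u₀ hu₀S (by rw [hu₀, ← hw1])
    have h2 : WP.Path π K u₀ [] [] := by
      have hacc : wordInv u₀ ++ [] ∈ M1.accepts := by
        rw [hM1]
        show wordInv u₀ ++ [] ∈ sub S π {1}
        rw [List.append_nil]
        exact ⟨hS.inv_mem u₀ hu₀S, by rw [Set.mem_singleton_iff, WP.ev_wordInv hπ, hu₀]; simp⟩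
      have := WP.slice hπ hK1 none hconst1 u₀ [] hacc []
      simpa using this
    have h3 : WP.Path π K [] w [] := by
      have := WP.Path.trans π K h1 h2
      simpa using this
    have hrun : WP.RunSeg π K .idle [] w .idle [] := by
      have := h3 []
      simpa using this
    have hsim := WP.sim π K hrun rfl trivial trivial
    exact hsim
end

section
/- Let S be an extendable Stallings section for an m-epi π : Ã* → G and let H be a finitely generated subgroup of G. Then H has finite index in G if and only if S ⊆ Pref(S_H). -/
namespace StallingsAux
open Stallings FreeGroup

variable {α : Type} {G : Type} [Group G]

/-! ### Basic lemmas on `redW` -/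

lemma redW_def (w : Word α) : redW w = @FreeGroup.reduce α (Classical.decEq α) w := rfl

lemma redW_nil : redW ([] : Word α) = [] := rfl

lemma redW_singleton (a : α × Bool) : redW [a] = [a] := rfl

lemma red_redW (w : Word α) : FreeGroup.Red w (redW w) := by
  letI := Classical.decEq α
  rw [redW_def]; exact FreeGroup.reduce.red

lemma redW_eq_of_red {w₁ w₂ : Word α} (h : FreeGroup.Red w₁ w₂) : redW w₁ = redW w₂ := by
  letI := Classical.decEq α
  rw [redW_def, redW_def]; exact FreeGroup.reduce.eq_of_red h

lemma redW_append_left (x y : Word α) : redW (redW x ++ y) = redW (x ++ y) :=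
  (redW_eq_of_red (FreeGroup.Red.append_append (red_redW x) Relation.ReflTransGen.refl)).symm

lemma redW_append_right (x y : Word α) : redW (x ++ redW y) = redW (x ++ y) :=
  (redW_eq_of_red (FreeGroup.Red.append_append (Relation.ReflTransGen.refl) (red_redW y))).symm

lemma redW_append_both (x y : Word α) : redW (redW x ++ redW y) = redW (x ++ y) :=
  (redW_eq_of_red (FreeGroup.Red.append_append (red_redW x) (red_redW y))).symm

lemma redW_redW (x : Word α) : redW (redW x) = redW x :=
  (redW_eq_of_red (red_redW x)).symm

lemma redW_cons_nil {w : Word α} (h : redW w = []) (a : α × Bool) : redW (a :: w) = [a] := by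
  letI := Classical.decEq α
  rw [redW_def] at h ⊢
  rw [FreeGroup.reduce.cons, h]

lemma redW_cons_cancel {w : Word α} {x : α} {b : Bool} {t : Word α}
    (h : redW w = (x, !b) :: t) : redW ((x, b) :: w) = t := by
  letI := Classical.decEq α
  rw [redW_def] at h ⊢
  rw [FreeGroup.reduce.cons, h]
  simp

lemma redW_cons_skip {w : Word α} {hd : α × Bool} {t : Word α} (h : redW w = hd :: t)
    (a : α × Bool) (hne : ¬(a.1 = hd.1 ∧ a.2 = !hd.2)) : redW (a :: w) = a :: hd :: t := by
  letI := Classical.decEq α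
  rw [redW_def] at h ⊢
  rw [FreeGroup.reduce.cons, h]
  simp only [if_neg hne]

lemma mem_reduced_iff {w : Word α} : w ∈ (Reduced : Language (α × Bool)) ↔ redW w = w :=
  Iff.rfl

/-! ### Lemmas on `ev` -/

lemma ev_nil (π : FreeMonoid (α × Bool) →* G) : ev π ([] : Word α) = 1 := by
  show π (FreeMonoid.ofList []) = 1
  rw [FreeMonoid.ofList_nil]
  exact map_one π

lemma ev_append (π : FreeMonoid (α × Bool) →* G) (u v : Word α) :
    ev π (u ++ v) = ev π u * ev π v := by
  show π (FreeMonoid.ofList (u ++ v)) = _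
  rw [FreeMonoid.ofList_append]
  exact map_mul π _ _

lemma ev_singleton (π : FreeMonoid (α × Bool) →* G) (a : α × Bool) :
    ev π [a] = π (FreeMonoid.of a) := by
  show π (FreeMonoid.ofList [a]) = _
  rw [FreeMonoid.ofList_singleton]

lemma ev_cons (π : FreeMonoid (α × Bool) →* G) (a : α × Bool) (w : Word α) :
    ev π (a :: w) = π (FreeMonoid.of a) * ev π w := by
  have : (a :: w) = [a] ++ w := rfl
  rw [this, ev_append, ev_singleton]

lemma ev_step {π : FreeMonoid (α × Bool) →* G} (hπ : IsMEpi π) {w₁ w₂ : Word α}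
    (h : FreeGroup.Red.Step w₁ w₂) : ev π w₁ = ev π w₂ := by
  cases h with
  | @not L₁ L₂ x b =>
    rw [ev_append, ev_append, ev_cons, ev_cons]
    rw [hπ.matched x b]
    simp

lemma ev_red {π : FreeMonoid (α × Bool) →* G} (hπ : IsMEpi π) {w₁ w₂ : Word α}
    (h : FreeGroup.Red w₁ w₂) : ev π w₁ = ev π w₂ := by
  induction h with
  | refl => rfl
  | tail _ hstep ih => exact ih.trans (ev_step hπ hstep)

lemma ev_redW {π : FreeMonoid (α × Bool) →* G} (hπ : IsMEpi π) (w : Word α) :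
    ev π (redW w) = ev π w :=
  (ev_red hπ (red_redW w)).symm

/-! ### Lemmas on `wordInv` -/

lemma wordInv_eq_invRev (w : Word α) : wordInv w = FreeGroup.invRev w := rfl

lemma wordInv_wordInv (w : Word α) : wordInv (wordInv w) = w := by
  rw [wordInv_eq_invRev, wordInv_eq_invRev]; exact FreeGroup.invRev_invRev

lemma redW_wordInv (w : Word α) : redW (wordInv w) = wordInv (redW w) := by
  letI := Classical.decEq α
  rw [wordInv_eq_invRev, wordInv_eq_invRev, redW_def, redW_def]
  exact FreeGroup.reduce_invRev

lemma wordInv_append (u v : Word α) : wordInv (u ++ v) = wordInv v ++ wordInv u := by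
  simp [wordInv]

lemma wordInv_cons (a : α × Bool) (w : Word α) :
    wordInv (a :: w) = wordInv w ++ [letterInv a] := by
  simp [wordInv]

lemma ev_wordInv {π : FreeMonoid (α × Bool) →* G} (hπ : IsMEpi π) (w : Word α) :
    ev π (wordInv w) = (ev π w)⁻¹ := by
  induction w with
  | nil => simp [wordInv, ev_nil]
  | cons a w ih =>
    rw [wordInv_cons, ev_append, ih, ev_singleton, ev_cons]
    have h : π (FreeMonoid.of (letterInv a)) = (π (FreeMonoid.of a))⁻¹ := by
      have := hπ.matched a.1 a.2
      simpa [letterInv] using this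
    rw [h, mul_inv_rev]

lemma wordInv_flatten (l : List (Word α)) :
    wordInv l.flatten = ((l.map wordInv).reverse).flatten := by
  induction l with
  | nil => simp [wordInv]
  | cons x l ih => simp [wordInv_append, ih]

/-! ### Automaton path lemmas -/

open Stallings.Automaton

lemma path_append {β Q : Type} {M : Automaton β Q} {p q r : Q} {u v : List β}
    (h1 : M.Path p u q) (h2 : M.Path q v r) : M.Path p (u ++ v) r := by
  induction h1 with
  | nil => exact h2
  | cons e _ ih => exact .cons e (ih h2)

lemma path_nil_eq {β Q : Type} {M : Automaton β Q} {p q : Q} (h : M.Path p [] q) : p = q := by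
  cases h; rfl

lemma path_split {β Q : Type} {M : Automaton β Q} {u v : List β} {p r : Q}
    (h : M.Path p (u ++ v) r) : ∃ q, M.Path p u q ∧ M.Path q v r := by
  induction u generalizing p with
  | nil => exact ⟨p, .nil p, h⟩
  | cons a u ih =>
    cases h with
    | cons e h' =>
      obtain ⟨q, hq1, hq2⟩ := ih h'
      exact ⟨q, .cons e hq1, hq2⟩

/-! ### DFA adapter -/

def dfaAut {β σ : Type} (M : DFA β σ) : Automaton β σ :=
  ⟨M.start, M.accept, {e | M.step e.1 e.2.1 = e.2.2}⟩

lemma dfaAut_path {β σ : Type} (M : DFA β σ) (w : List β) :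
    ∀ p q, (dfaAut M).Path p w q ↔ M.evalFrom p w = q := by
  induction w with
  | nil =>
    intro p q
    constructor
    · intro h; exact path_nil_eq h
    · intro h; rw [DFA.evalFrom_nil] at h; subst h; exact .nil p
  | cons a w ih =>
    intro p q
    constructor
    · intro h
      cases h with
      | @cons _ s _ _ _ e h' =>
        have he : M.step p a = s := e
        have := (ih s q).1 h'
        show M.evalFrom (M.step p a) w = q
        rw [he]; exact this
    · intro h
      have e : (p, a, M.step p a) ∈ (dfaAut M).edges := rfl
      exact .cons e ((ih _ q).2 h)

lemma dfaAut_lang {β σ : Type} (M : DFA β σ) : (dfaAut M).lang = M.accepts := by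
  ext w
  constructor
  · rintro ⟨t, ht, hp⟩
    have h2 : M.evalFrom M.start w = t := (dfaAut_path M w _ _).1 hp
    show M.evalFrom M.start w ∈ M.accept
    rw [h2]; exact ht
  · intro h
    exact ⟨M.evalFrom M.start w, h, (dfaAut_path M w _ _).2 rfl⟩

/-! ### Star automaton -/

def starEdge {β : Type} {ι : Type} {Q : ι → Type} (M : ∀ i, Automaton β (Q i)) :
    Option (Σ i, Q i) → β → Option (Σ i, Q i) → Prop
  | none, a, none => ∃ i q, ((M i).start, a, q) ∈ (M i).edges ∧ q ∈ (M i).accept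
  | none, a, some ⟨i, q⟩ => ((M i).start, a, q) ∈ (M i).edges
  | some ⟨i, p⟩, a, none => ∃ q, (p, a, q) ∈ (M i).edges ∧ q ∈ (M i).accept
  | some ⟨i, p⟩, a, some ⟨j, q⟩ => ∃ h : i = j, (h ▸ p, a, q) ∈ (M j).edges

def starAut {β : Type} {ι : Type} {Q : ι → Type} (M : ∀ i, Automaton β (Q i)) :
    Automaton β (Option (Σ i, Q i)) where
  start := none
  accept := {none}
  edges := {e | starEdge M e.1 e.2.1 e.2.2}

lemma starAut_edge_iff {β ι : Type} {Q : ι → Type} (M : ∀ i, Automaton β (Q i))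
    (s : Option (Σ i, Q i)) (a : β) (s' : Option (Σ i, Q i)) :
    ((s, a, s') ∈ (starAut M).edges) ↔ starEdge M s a s' := Iff.rfl

lemma star_toNone {β ι : Type} {Q : ι → Type} {M : ∀ i, Automaton β (Q i)}
    {i : ι} {u : List β} {p t : Q i} (h : (M i).Path p u t) :
    t ∈ (M i).accept → u ≠ [] → (starAut M).Path (some ⟨i, p⟩) u none := by
  induction h with
  | nil => exact fun _ hu => absurd rfl hu
  | @cons p' q' r' a w e h' ih =>
    intro ht _
    cases w with
    | nil =>
      have hqr : q' = r' := path_nil_eq h'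
      subst hqr
      have e2 : ((some ⟨i, p'⟩ : Option (Σ i, Q i)), a, (none : Option (Σ i, Q i))) ∈
          (starAut M).edges := ⟨q', e, ht⟩
      exact .cons e2 (.nil none)
    | cons b w' =>
      have e1 : ((some ⟨i, p'⟩ : Option (Σ i, Q i)), a, some ⟨i, q'⟩) ∈ (starAut M).edges :=
        ⟨rfl, e⟩
      exact .cons e1 (ih ht (List.cons_ne_nil b w'))

lemma star_chunk {β ι : Type} {Q : ι → Type} {M : ∀ i, Automaton β (Q i)}
    {i : ι} {w : List β} (h : w ∈ (M i).lang) : (starAut M).Path none w none := by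
  obtain ⟨t, ht, hp⟩ := h
  cases w with
  | nil => exact .nil none
  | cons a w' =>
    cases hp with
    | @cons _ q _ _ _ e h' =>
      cases w' with
      | nil =>
        have : q = t := path_nil_eq h'
        subst this
        have e4 : ((none : Option (Σ i, Q i)), a, (none : Option (Σ i, Q i))) ∈
            (starAut M).edges := ⟨i, q, e, ht⟩
        exact .cons e4 (.nil none)
      | cons b w'' =>
        have e2 : ((none : Option (Σ i, Q i)), a, some ⟨i, q⟩) ∈ (starAut M).edges := e
        exact .cons e2 (star_toNone h' ht (by simp))

lemma star_inner {β ι : Type} {Q : ι → Type} {M : ∀ i, Automaton β (Q i)} :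
    ∀ {w : List β} {i : ι} {p : Q i}, (starAut M).Path (some ⟨i, p⟩) w none →
    ∃ u v, w = u ++ v ∧ v.length < w.length ∧
      (∃ t ∈ (M i).accept, (M i).Path p u t) ∧ (starAut M).Path none v none := by
  intro w
  induction w with
  | nil =>
    intro i p h
    exact absurd (path_nil_eq h) (by simp)
  | cons a w' ih =>
    intro i p h
    cases h with
    | @cons _ s' _ _ _ e h' =>
      cases s' with
      | none =>
        obtain ⟨q, he, hq⟩ := e
        exact ⟨[a], w', rfl, by simp, ⟨q, hq, .cons he (.nil q)⟩, h'⟩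
      | some s =>
        obtain ⟨j, q⟩ := s
        obtain ⟨hij, he⟩ := (e : starEdge M (some ⟨i, p⟩) a (some ⟨j, q⟩))
        subst hij
        obtain ⟨u, v, hw, hlen, ⟨t, ht, hput⟩, hv⟩ := ih h'
        exact ⟨a :: u, v, by rw [hw]; rfl, Nat.lt_succ_of_lt hlen,
          ⟨t, ht, .cons he hput⟩, hv⟩

lemma star_sound {ι : Type} {Q : ι → Type} {M : ∀ i, Automaton (α × Bool) (Q i)}
    {π : FreeMonoid (α × Bool) →* G} {H : Subgroup G}
    (hchunk : ∀ i, ∀ w ∈ (M i).lang, ev π w ∈ H) :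
    ∀ w, (starAut M).Path none w none → ev π w ∈ H := by
  have main : ∀ n : ℕ, ∀ w : List (α × Bool), w.length ≤ n →
      (starAut M).Path none w none → ev π w ∈ H := by
    intro n
    induction n with
    | zero =>
      intro w hw _
      have : w = [] := List.length_eq_zero_iff.1 (Nat.le_zero.1 hw)
      subst this
      rw [ev_nil]; exact one_mem H
    | succ n ihn =>
      intro w hw hpath
      cases hpath with
      | nil => rw [ev_nil]; exact one_mem H
      | @cons _ s' _ a w' e h' =>
        cases s' with
        | none =>
          obtain ⟨i, q, he, hq⟩ := e
          have h1 : ev π [a] ∈ H := hchunk i [a] ⟨q, hq, .cons he (.nil q)⟩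
          have h2 : ev π w' ∈ H := ihn w' (by simpa using Nat.succ_le_succ_iff.1 hw) h'
          have : (a :: w') = [a] ++ w' := rfl
          rw [this, ev_append]
          exact mul_mem h1 h2
        | some s =>
          obtain ⟨i, q⟩ := s
          have he : ((M i).start, a, q) ∈ (M i).edges := e
          obtain ⟨u, v, hw', hlen, ⟨t, ht, hput⟩, hv⟩ := star_inner h'
          have h1 : ev π (a :: u) ∈ H := hchunk i (a :: u) ⟨t, ht, .cons he hput⟩
          have h2 : ev π v ∈ H := by
            refine ihn v ?_ hv
            have : w'.length ≤ n := Nat.succ_le_succ_iff.1 (by simpa using hw)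
            exact le_trans (Nat.le_of_lt hlen) this
          have : (a :: w') = (a :: u) ++ v := by rw [hw']; rfl
          rw [this, ev_append]
          exact mul_mem h1 h2
  exact fun w h => main w.length w le_rfl h

/-! ### Benois saturation -/

def benois {Q : Type} (N : Automaton (α × Bool) Q) : Automaton (α × Bool) Q where
  start := N.start
  accept := {q | ∃ c, redW c = [] ∧ ∃ t ∈ N.accept, N.Path q c t}
  edges := {e | ∃ w, redW w = [e.2.1] ∧ N.Path e.1 w e.2.2}

lemma benois_sound {Q : Type} {N : Automaton (α × Bool) Q} :
    ∀ {u : Word α} {p q : Q}, (benois N).Path p u q →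
      ∃ w, N.Path p w q ∧ redW w = redW u := by
  intro u p q h
  induction h with
  | nil => exact ⟨[], .nil _, rfl⟩
  | @cons p' s' r' a w' e h' ih =>
    obtain ⟨wa, hwa, hpa⟩ := e
    obtain ⟨w, hpw, hrw⟩ := ih
    refine ⟨wa ++ w, path_append hpa hpw, ?_⟩
    calc redW (wa ++ w) = redW (redW wa ++ redW w) := (redW_append_both _ _).symm
      _ = redW ([a] ++ redW w') := by rw [hwa, hrw]
      _ = redW ([a] ++ w') := redW_append_right _ _
      _ = redW (a :: w') := rfl

lemma benois_complete {Q : Type} {N : Automaton (α × Bool) Q} :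
    ∀ {w : Word α} {p q : Q}, N.Path p w q →
      ∃ r, (benois N).Path p (redW w) r ∧ ∃ c, redW c = [] ∧ N.Path r c q := by
  intro w p q h
  induction h with
  | nil => exact ⟨_, by rw [redW_nil]; exact .nil _, [], rfl, .nil _⟩
  | @cons p' s' r' a w' e h' ih =>
    obtain ⟨r, hpr, c, hcr, hcp⟩ := ih
    have ea : ((p', a, s') : Q × (α × Bool) × Q) ∈ (benois N).edges :=
      ⟨[a], redW_singleton a, .cons e (.nil s')⟩
    rcases hcase : redW w' with _ | ⟨b, t⟩
    · -- redW w' = []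
      rw [hcase] at hpr
      have hr : s' = r := path_nil_eq hpr
      refine ⟨s', ?_, c, hcr, by rw [hr]; exact hcp⟩
      rw [redW_cons_nil hcase a]
      exact .cons ea (.nil s')
    · by_cases hcan : a.1 = b.1 ∧ a.2 = !b.2
      · -- cancellation
        have hb : b = letterInv a := by
          obtain ⟨h1, h2⟩ := hcan
          have : b.2 = !a.2 := by rw [h2]; simp
          cases a; cases b; simp_all [letterInv]
        have hred : redW (a :: w') = t := by
          have : redW w' = (a.1, !a.2) :: t := by
            rw [hcase, hb]; rfl
          have h2 := redW_cons_cancel (x := a.1) (b := a.2) (t := t) this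
          simpa using h2
        rw [hcase] at hpr
        cases hpr with
        | @cons _ s₁ _ _ _ eb hpt =>
          obtain ⟨wb, hwb, hpb⟩ := eb
          have habnil : redW (a :: wb) = [] := by
            show redW ([a] ++ wb) = []
            rw [← redW_append_right [a] wb, hwb, hb]
            have hsing : redW [letterInv a] = (a.1, !a.2) :: [] := by
              rw [redW_singleton]; rfl
            have h3 := redW_cons_cancel (x := a.1) (b := a.2) (t := ([] : Word α)) hsing
            exact h3
          cases hpt with
          | nil =>
            -- t = [], r = s₁
            refine ⟨p', ?_, (a :: wb) ++ c, ?_, ?_⟩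
            · rw [hred]; exact .nil p'
            · calc redW ((a :: wb) ++ c) = redW (redW (a :: wb) ++ redW c) :=
                    (redW_append_both _ _).symm
                _ = [] := by rw [habnil, hcr]; rfl
            · exact path_append (Automaton.Path.cons e hpb) hcp
          | @cons _ s₂ _ c₀ t' ec hpt' =>
            obtain ⟨wc, hwc, hpc⟩ := ec
            have enew : ((p', c₀, s₂) : Q × (α × Bool) × Q) ∈ (benois N).edges := by
              refine ⟨(a :: wb) ++ wc, ?_, path_append (Automaton.Path.cons e hpb) hpc⟩
              calc redW ((a :: wb) ++ wc) = redW (redW (a :: wb) ++ redW wc) :=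
                    (redW_append_both _ _).symm
                _ = redW [c₀] := by rw [habnil, hwc]; rfl
                _ = [c₀] := redW_singleton c₀
            refine ⟨r, ?_, c, hcr, hcp⟩
            rw [hred]
            exact .cons enew hpt'
      · -- no cancellation
        have hred : redW (a :: w') = a :: b :: t := redW_cons_skip hcase a hcan
        refine ⟨r, ?_, c, hcr, hcp⟩
        rw [hred]
        rw [hcase] at hpr
        exact .cons ea hpr


instance optionFinite {X : Type} [Finite X] : Finite (Option X) :=
  Finite.of_equiv _ (Equiv.optionEquivSumPUnit.{0,0} X).symm

lemma star_chunks {β ι : Type} {Q : ι → Type} {M : ∀ i, Automaton β (Q i)} :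
    ∀ (l : List (List β)), (∀ x ∈ l, (starAut M).Path none x none) →
      (starAut M).Path none l.flatten none
  | [], _ => .nil none
  | x :: l, h => by
    rw [List.flatten_cons]
    exact path_append (h x List.mem_cons_self)
      (star_chunks l (fun y hy => h y (List.mem_cons_of_mem x hy)))

/-! ### Generators indexing -/

def gIdx (G : Type) [Group G] (T : Finset G) : Type :=
  Unit ⊕ ({x : G // x ∈ T} ⊕ {x : G // x ∈ T})

instance (G : Type) [Group G] (T : Finset G) : Finite (gIdx G T) := by
  unfold gIdx; infer_instance

def gval {G : Type} [Group G] (T : Finset G) : gIdx G T → G :=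
  Sum.elim (fun _ => 1) (Sum.elim (fun t => t.1) (fun t => (t.1)⁻¹))

def ginv {G : Type} [Group G] (T : Finset G) : gIdx G T → gIdx G T :=
  Sum.elim (fun u => Sum.inl u)
    (Sum.elim (fun t => Sum.inr (Sum.inr t)) (fun t => Sum.inr (Sum.inl t)))

lemma gval_ginv {G : Type} [Group G] (T : Finset G) (i : gIdx G T) :
    gval T (ginv T i) = (gval T i)⁻¹ := by
  rcases i with u | t | t <;> simp [gval, ginv] <;> rfl

lemma gval_mem {G : Type} [Group G] {T : Finset G} {H : Subgroup G}
    (hT : Subgroup.closure (↑T : Set G) = H) (i : gIdx G T) : gval T i ∈ H := by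
  rcases i with u | t | t
  · exact one_mem H
  · rw [← hT]; exact Subgroup.subset_closure t.2
  · rw [← hT]; exact inv_mem (Subgroup.subset_closure t.2)

/-! ### The backward direction -/

theorem backward {α G : Type} [Group G] (π : FreeMonoid (α × Bool) →* G) (hπ : IsMEpi π)
    (S : Language (α × Bool)) (hS : IsStallingsSection π S)
    (H : Subgroup G) (hH : H.FG)
    (hsub : ∀ w ∈ S, w ∈ Pref (sub S π (↑H : Set G))) : Finite (G ⧸ H) := by
  classical
  obtain ⟨T, hT⟩ := hH
  choose σ F MD hMD using fun i : gIdx G T => hS.s1 (gval T i)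
  haveI : ∀ i, Fintype (σ i) := F
  let A : ∀ i, Automaton (α × Bool) (σ i) := fun i => dfaAut (MD i)
  have hA : ∀ i, (A i).lang = sub S π {gval T i} := fun i =>
    (dfaAut_lang (MD i)).trans (hMD i)
  set N := starAut A with hN
  -- soundness of the star automaton
  have hchunk : ∀ i, ∀ w ∈ (A i).lang, ev π w ∈ H := by
    intro i w hw
    rw [hA i] at hw
    have h2 : ev π w = gval T i := hw.2
    rw [h2]; exact gval_mem hT i
  have hsound : ∀ w, N.Path none w none → ev π w ∈ H := star_sound hchunk
  -- every word of S_H is the reduction of a concatenation of chunks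
  have hP : ∀ g ∈ Subgroup.closure (↑T : Set G), ∀ w ∈ sub S π {g},
      ∃ w', redW w' = w ∧ ∃ l : List (Word α), w' = l.flatten ∧
        ∀ x ∈ l, ∃ i, x ∈ sub S π {gval T i} := by
    intro g hg
    induction hg using Subgroup.closure_induction with
    | mem x hx =>
      intro w hw
      refine ⟨w, hS.reduced w hw.1, [w], by simp, ?_⟩
      intro x' hx'
      rw [List.mem_singleton] at hx'
      subst hx'
      exact ⟨Sum.inr (Sum.inl ⟨x, hx⟩), hw⟩
    | one =>
      intro w hw
      refine ⟨w, hS.reduced w hw.1, [w], by simp, ?_⟩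
      intro x' hx'
      rw [List.mem_singleton] at hx'
      subst hx'
      exact ⟨Sum.inl (), hw⟩
    | mul x y hx hy ihx ihy =>
      intro w hw
      obtain ⟨z, hz, hzw⟩ := hS.s2 x y w hw
      obtain ⟨u₁, hu₁, u₂, hu₂, hz12⟩ := Language.mem_mul.1 hz
      obtain ⟨w₁, hr₁, l₁, hfl₁, hm₁⟩ := ihx u₁ hu₁
      obtain ⟨w₂, hr₂, l₂, hfl₂, hm₂⟩ := ihy u₂ hu₂
      refine ⟨w₁ ++ w₂, ?_, l₁ ++ l₂, by rw [hfl₁, hfl₂, List.flatten_append], ?_⟩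
      · calc redW (w₁ ++ w₂) = redW (redW w₁ ++ redW w₂) := (redW_append_both _ _).symm
          _ = redW (u₁ ++ u₂) := by rw [hr₁, hr₂]
          _ = redW z := by rw [hz12]
          _ = w := hzw
      · intro x' hx'
        rcases List.mem_append.1 hx' with h | h
        exacts [hm₁ x' h, hm₂ x' h]
    | inv x hx ih =>
      intro w hw
      have hwi : wordInv w ∈ sub S π {x} := by
        refine ⟨hS.inv_mem w hw.1, ?_⟩
        rw [Set.mem_singleton_iff, ev_wordInv hπ]
        have h2 : ev π w = x⁻¹ := hw.2
        rw [h2, inv_inv]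
      obtain ⟨w', hr', l, hfl, hm⟩ := ih (wordInv w) hwi
      refine ⟨wordInv w', ?_, (l.map wordInv).reverse, by rw [hfl, wordInv_flatten], ?_⟩
      · rw [redW_wordInv, hr', wordInv_wordInv]
      · intro x' hx'
        rw [List.mem_reverse, List.mem_map] at hx'
        obtain ⟨y, hy, hyx⟩ := hx'
        subst hyx
        obtain ⟨i, hyi⟩ := hm y hy
        refine ⟨ginv T i, hS.inv_mem y hyi.1, ?_⟩
        rw [Set.mem_singleton_iff, ev_wordInv hπ, gval_ginv]
        have h2 : ev π y = gval T i := hyi.2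
        rw [h2]
  -- S_H is contained in the language of the Benois automaton
  have hmem : ∀ w ∈ sub S π (↑H : Set G), w ∈ (benois N).lang := by
    intro w hw
    have hgc : ev π w ∈ Subgroup.closure (↑T : Set G) := by rw [hT]; exact hw.2
    obtain ⟨w', hred, l, hfl, hl⟩ := hP (ev π w) hgc w ⟨hw.1, rfl⟩
    have hpath : N.Path none w' none := by
      rw [hfl]
      refine star_chunks l ?_
      intro x hx
      obtain ⟨i, hxi⟩ := hl x hx
      refine star_chunk (M := A) (i := i) ?_
      rw [hA i]; exact hxi
    obtain ⟨r, hpr, c, hcr, hcp⟩ := benois_complete hpath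
    refine ⟨r, ⟨c, hcr, none, rfl, hcp⟩, ?_⟩
    show (benois N).Path none w r
    rw [← hred]
    exact hpr
  -- the language of the Benois automaton maps into H
  have hsound' : ∀ w ∈ (benois N).lang, ev π w ∈ H := by
    rintro w ⟨t, ⟨c, hcr, t', ht', hcp⟩, hpath⟩
    have ht'' : t' = none := ht'
    subst ht''
    obtain ⟨w₀, hp₀, hr₀⟩ := benois_sound hpath
    have hfull : N.Path none (w₀ ++ c) none := path_append hp₀ hcp
    have hH0 := hsound _ hfull
    rw [ev_append] at hH0
    have e1 : ev π w₀ = ev π w := by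
      rw [← ev_redW hπ w₀, ← ev_redW hπ w, hr₀]
    have e2 : ev π c = 1 := by rw [← ev_redW hπ c, hcr, ev_nil]
    rw [e1, e2, mul_one] at hH0
    exact hH0
  -- counting: a surjection from the (finite) state set onto G ⧸ H
  let QN := Option (Σ i, σ i)
  haveI : ∀ i, Finite (σ i) := fun i => Finite.of_fintype _
  haveI hQN : Finite QN := inferInstance
  let pr : QN → Prop := fun q => ∃ v, ∃ t, t ∈ (benois N).accept ∧ (benois N).Path q v t
  let f : QN → G ⧸ H := fun q =>
    if h : pr q then QuotientGroup.mk (ev π (Classical.choose h)) else QuotientGroup.mk 1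
  have hfsurj : Function.Surjective f := by
    intro gb
    induction gb using QuotientGroup.induction_on with
    | H g =>
      obtain ⟨u, huS, huev⟩ := hS.exists_rep g⁻¹
      obtain ⟨v, hv⟩ := hsub u huS
      obtain ⟨t, ht, hpath⟩ := hmem _ hv
      obtain ⟨q, hq1, hq2⟩ := path_split hpath
      have hpq : pr q := ⟨v, t, ht, hq2⟩
      refine ⟨q, ?_⟩
      obtain ⟨t₀, ht₀, hpt₀⟩ := Classical.choose_spec hpq
      have hl : u ++ Classical.choose hpq ∈ (benois N).lang :=
        ⟨t₀, ht₀, path_append hq1 hpt₀⟩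
      have hH1 : ev π (u ++ Classical.choose hpq) ∈ H := hsound' _ hl
      rw [ev_append, huev] at hH1
      have hfq : f q = QuotientGroup.mk (ev π (Classical.choose hpq)) := dif_pos hpq
      rw [hfq]
      refine (QuotientGroup.eq).2 ?_
      have h3 := inv_mem hH1
      rwa [mul_inv_rev, inv_inv] at h3
  exact Finite.of_surjective f hfsurj

end StallingsAux

open Stallings in
/-- Let `S` be an extendable Stallings section for the m-epi `π`
and let `H` be a f.g. subgroup of `G`. Then `H` has finite index in `G` if and
only if `S ⊆ Pref (S_H)`. -/
theorem finiteIndex_iff_subset_pref {α G : Type} [Finite α] [Group G]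
    (π : FreeMonoid (α × Bool) →* G) (hπ : IsMEpi π)
    (S : Language (α × Bool)) (hS : IsStallingsSection π S) (hE : Extendable π S)
    (H : Subgroup G) (hH : H.FG) :
    H.FiniteIndex ↔ S ⊆ Pref (sub S π ↑H) := by
  classical
  constructor
  · -- finite index implies the prefix property
    intro hFI
    haveI := hFI
    haveI hfin : Finite (G ⧸ H) := inferInstance
    intro u hu
    obtain ⟨v, hvred, hvn, N, hN⟩ := hE u hu
    set c := ev π u * ev π v * (ev π u)⁻¹ with hc
    have hconj : ∀ n : ℕ, ev π u * (ev π v) ^ n * (ev π u)⁻¹ = c ^ n := by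
      intro n
      induction n with
      | zero => simp
      | succ n ih => rw [pow_succ, pow_succ, ← ih, hc]; group
    obtain ⟨m, n, hmn, heq⟩ :=
      Finite.exists_ne_map_eq_of_infinite (fun n : ℕ => (QuotientGroup.mk (c ^ n) : G ⧸ H))
    have key : ∀ m n : ℕ, m < n →
        (QuotientGroup.mk (c ^ m) : G ⧸ H) = QuotientGroup.mk (c ^ n) →
        c ^ (n - m) ∈ H := by
      intro m n hlt he
      have h1 : (c ^ m)⁻¹ * c ^ n ∈ H := (QuotientGroup.eq).1 he
      have h2 : c ^ n = c ^ m * c ^ (n - m) := by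
        rw [← pow_add]
        congr 1
        omega
      rw [h2, inv_mul_cancel_left] at h1
      exact h1
    have hkey : ∃ k : ℕ, 1 ≤ k ∧ c ^ k ∈ H := by
      rcases Nat.lt_or_ge m n with h | h
      · exact ⟨n - m, by omega, key m n h heq⟩
      · have hlt : n < m := by omega
        exact ⟨m - n, by omega, key n m hlt heq.symm⟩
    obtain ⟨k, hk1, hkH⟩ := hkey
    have hn' : c ^ (k * (N + 1)) ∈ H := by rw [pow_mul]; exact pow_mem hkH _
    have hge : k * (N + 1) ≥ N := by nlinarith
    obtain ⟨v', hv'⟩ := hN (k * (N + 1)) hge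
    refine ⟨v', hv'.1, ?_⟩
    have h2 := hv'.2
    rw [Set.mem_singleton_iff, hconj] at h2
    show ev π (u ++ v') ∈ (↑H : Set G)
    rw [h2]
    exact hn'
  · -- the prefix property implies finite index
    intro hsub
    haveI : Finite (G ⧸ H) := StallingsAux.backward π hπ S hS H hH hsub
    exact Subgroup.finiteIndex_of_finite_quotient
end
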